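/- There exist universal constants c, C > 0 such that the following holds. Let G = (V, E) be a finite undirected multigraph on n ≥ 2 vertices, let β > 0 and 0 < α < c / log n, and let y be an (α, β)-locally optimal fractional orientation of G. Then the maximum fractional in-degree μ = max_{v ∈ V} ȳ(v) satisfies μ ≤ e^{C·√(α·log n)} · ( ρ(G) + C·√(log n / α)·β ). -/

import Mathlib

open Finset

/-- A fractional orientation of a finite undirected multigraph whose edges are
indexed by `E`, where edge `e` joins the two distinct vertices `a e` and `b e`.
`y e v` is the (nonnegative) fraction of edge `e` oriented toward `v`, and for
each edge the two fractions at its endpoints sum to `1`. -/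
structure FracOrient (V E : Type*) (a b : E → V) where
  y : E → V → ℝ
  nonneg : ∀ e v, 0 ≤ y e v
  sum_one : ∀ e, y e (a e) + y e (b e) = 1

/-- The fractional in-degree `ȳ(v)`: the sum, over edges incident to `v`,
of the fraction of the edge oriented toward `v`. -/
noncomputable def inDeg {V E : Type*} [Fintype E] [DecidableEq V]
    (a b : E → V) (y : E → V → ℝ) (v : V) : ℝ :=
  ∑ e ∈ univ.filter (fun e => a e = v ∨ b e = v), y e v

/-- The maximum fractional in-degree `max_{v ∈ V} ȳ(v)`. -/
noncomputable def maxInDeg {V E : Type*} [Fintype E] [DecidableEq V]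
    (a b : E → V) (y : E → V → ℝ) : ℝ :=
  sSup (Set.range (inDeg a b y))

/-- The density `|E(S)|/|S|` of a set `S` of vertices: the number of edges with
both endpoints in `S` (counted with multiplicity), divided by `|S|`. -/
noncomputable def density {V E : Type*} [Fintype E] [DecidableEq V]
    (a b : E → V) (S : Finset V) : ℝ :=
  ((univ.filter fun e => a e ∈ S ∧ b e ∈ S).card : ℝ) / S.card

/-- The maximum subgraph density `ρ(G) = max_{∅ ≠ S ⊆ V} |E(S)|/|S|`. -/
noncomputable def maxDensity {V E : Type*} [Fintype E] [DecidableEq V]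
    (a b : E → V) : ℝ :=
  sSup { d : ℝ | ∃ S : Finset V, S.Nonempty ∧ d = density a b S }

/-- A fractional orientation is locally optimal if it never directs any
fraction of an edge toward an endpoint of strictly larger in-degree. -/
def LocallyOpt {V E : Type*} [Fintype E] [DecidableEq V]
    (a b : E → V) (y : E → V → ℝ) : Prop :=
  ∀ e, (0 < y e (b e) → inDeg a b y (b e) ≤ inDeg a b y (a e)) ∧
       (0 < y e (a e) → inDeg a b y (a e) ≤ inDeg a b y (b e))

/-- `(α, β)`-local optimality: if `y(e,v) > 0` then `ȳ(v) < (1+α)·ȳ(u) + β`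
for the other endpoint `u` of `e`. -/
def ApxLocallyOpt {V E : Type*} [Fintype E] [DecidableEq V]
    (a b : E → V) (y : E → V → ℝ) (α β : ℝ) : Prop :=
  ∀ e, (0 < y e (b e) → inDeg a b y (b e) < (1 + α) * inDeg a b y (a e) + β) ∧
       (0 < y e (a e) → inDeg a b y (a e) < (1 + α) * inDeg a b y (b e) + β)

set_option maxHeartbeats 2000000 in
/-- There exist universal constants `c, C > 0` such that for
every finite multigraph on `n ≥ 2` vertices, every `β > 0` and
`0 < α < c / log n`, and every `(α, β)`-locally optimal fractional orientation,
the maximum fractional in-degree `μ` satisfies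
`μ ≤ e^{C·√(α·log n)} · (ρ(G) + C·√(log n / α)·β)`. -/
theorem apxLocal_implies_global : ∃ c C : ℝ, 0 < c ∧ 0 < C ∧
    ∀ (V E : Type) [Fintype V] [Fintype E] [DecidableEq V],
    ∀ a b : E → V, (∀ e, a e ≠ b e) → 2 ≤ Fintype.card V →
    ∀ β : ℝ, 0 < β →
    ∀ α : ℝ, 0 < α → α < c / Real.log (Fintype.card V) →
    ∀ o : FracOrient V E a b, ApxLocallyOpt a b o.y α β →
      maxInDeg a b o.y ≤
        Real.exp (C * Real.sqrt (α * Real.log (Fintype.card V))) *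
          (maxDensity a b +
            C * Real.sqrt (Real.log (Fintype.card V) / α) * β) := by
  classical
  refine ⟨1/10, 100, by norm_num, by norm_num, ?_⟩
  intro V E _ _ _ a b hab hn β hβ α hα hαc o hopt
  have hVne : Nonempty V := Fintype.card_pos_iff.1 (by omega)
  set n := Fintype.card V with hn_def
  set L := Real.log n with hL_def
  have hlog2 : (0.6931471803 : ℝ) < Real.log 2 := Real.log_two_gt_d9
  have hL2 : Real.log 2 ≤ L := by
    apply Real.log_le_log (by norm_num)
    exact_mod_cast hn
  have hLpos : (0:ℝ) < L := by linarith
  have hαL10 : α * L < 1/10 := (lt_div_iff₀ hLpos).1 hαc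
  have hα145 : α < 0.145 := by nlinarith
  have hαL : α < L := by linarith
  set A := Real.sqrt (α * L) with hA_def
  set x := Real.sqrt (L / α) with hx_def
  set k := ⌈x⌉₊ with hk_def
  have hA0 : 0 ≤ A := Real.sqrt_nonneg _
  have hAx : A * x = L := by
    rw [hA_def, hx_def, ← Real.sqrt_mul (by positivity)]
    rw [show α * L * (L / α) = L * L by field_simp]
    exact Real.sqrt_mul_self hLpos.le
  have hαx : α * x = A := by
    rw [hA_def, hx_def, show α * L = α^2 * (L/α) by field_simp,
      Real.sqrt_mul (sq_nonneg α), Real.sqrt_sq hα.le]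
  have hx1 : 1 ≤ x := by
    rw [hx_def, show (1:ℝ) = Real.sqrt 1 by simp]
    apply Real.sqrt_le_sqrt
    rw [le_div_iff₀ hα]; linarith
  have hx0 : 0 < x := by linarith
  have hxk : x ≤ (k:ℝ) := Nat.le_ceil x
  have hkx : (k:ℝ) ≤ 2 * x := by
    have := Nat.ceil_lt_add_one hx0.le
    rw [← hk_def] at this
    linarith
  have hk1 : 1 ≤ k := by
    have : 0 < k := Nat.ceil_pos.2 hx0
    omega
  have hαA : α ≤ A := by
    calc α = Real.sqrt (α^2) := (Real.sqrt_sq hα.le).symm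
      _ ≤ Real.sqrt (α * L) := Real.sqrt_le_sqrt (by nlinarith)
  have hαk : α * k ≤ 2 * A := by nlinarith
  have h1α : (0:ℝ) < 1 + α := by linarith
  have hpowk : (1+α)^k ≤ Real.exp (2*A) := by
    calc (1+α)^k ≤ (Real.exp α)^k :=
          pow_le_pow_left₀ (by linarith) (by linarith [Real.add_one_le_exp α]) k
      _ = Real.exp (α * k) := by rw [← Real.exp_nat_mul]; ring_nf
      _ ≤ Real.exp (2*A) := Real.exp_le_exp.2 hαk
  -- max in-degree attained
  obtain ⟨v₀, -, hv₀⟩ := Finset.exists_max_image (univ : Finset V) (inDeg a b o.y)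
    ⟨Classical.arbitrary V, mem_univ _⟩
  set μ := maxInDeg a b o.y with hμ_def
  have hμ_eq : μ = inDeg a b o.y v₀ := by
    refine le_antisymm ?_ ?_
    · apply csSup_le (Set.range_nonempty _)
      rintro d ⟨v, rfl⟩
      exact hv₀ v (mem_univ v)
    · exact le_csSup (Set.Finite.bddAbove (Set.finite_range _)) ⟨v₀, rfl⟩
  -- density facts
  set ρ := maxDensity a b with hρ_def
  have hBdd : BddAbove {d : ℝ | ∃ S : Finset V, S.Nonempty ∧ d = density a b S} := by
    refine ⟨(Fintype.card E : ℝ), ?_⟩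
    rintro d ⟨S, hS, rfl⟩
    rw [density]
    have h1 : (1:ℝ) ≤ S.card := by exact_mod_cast hS.card_pos
    have h2 : ((univ.filter fun e => a e ∈ S ∧ b e ∈ S).card : ℝ) ≤ Fintype.card E := by
      exact_mod_cast Finset.card_filter_le _ _
    calc ((univ.filter fun e => a e ∈ S ∧ b e ∈ S).card : ℝ) / S.card
        ≤ ((univ.filter fun e => a e ∈ S ∧ b e ∈ S).card : ℝ) := div_le_self (by positivity) h1
      _ ≤ _ := h2
  have hρ0 : 0 ≤ ρ := by
    have h1 : density a b {Classical.arbitrary V} ≤ ρ :=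
      le_csSup hBdd ⟨{Classical.arbitrary V}, Finset.singleton_nonempty _, rfl⟩
    have h2 : 0 ≤ density a b {Classical.arbitrary V} := by rw [density]; positivity
    linarith
  have hρS : ∀ S : Finset V, S.Nonempty →
      ((univ.filter fun e => a e ∈ S ∧ b e ∈ S).card : ℝ) ≤ ρ * S.card := by
    intro S hS
    have h1 : density a b S ≤ ρ := le_csSup hBdd ⟨S, hS, rfl⟩
    rw [density, div_le_iff₀ (by exact_mod_cast hS.card_pos)] at h1
    linarith [h1]
  -- trivial case: no edges
  rcases isEmpty_or_nonempty E with hE | hE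
  · have hdeg : inDeg a b o.y = fun _ => (0:ℝ) := by
      funext v
      rw [inDeg, Finset.univ_eq_empty, Finset.filter_empty, Finset.sum_empty]
    rw [hμ_def] at *
    unfold maxInDeg
    rw [hdeg, Set.range_const, csSup_singleton]
    have h1 : 0 ≤ ρ + 100 * x * β := by positivity
    exact mul_nonneg (Real.exp_pos _).le h1
  obtain ⟨e₀⟩ := hE
  have hρhalf : 1/2 ≤ ρ := by
    have hpair : ({a e₀, b e₀} : Finset V).Nonempty := Finset.insert_nonempty _ _
    have hd : density a b {a e₀, b e₀} ≤ ρ := le_csSup hBdd ⟨{a e₀, b e₀}, hpair, rfl⟩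
    have hmem : e₀ ∈ univ.filter
        (fun e => a e ∈ ({a e₀, b e₀} : Finset V) ∧ b e ∈ ({a e₀, b e₀} : Finset V)) :=
      Finset.mem_filter.2 ⟨mem_univ _, by simp, by simp⟩
    have h1 : (1:ℝ) ≤ (univ.filter
        (fun e => a e ∈ ({a e₀, b e₀} : Finset V) ∧ b e ∈ ({a e₀, b e₀} : Finset V))).card := by
      exact_mod_cast Finset.card_pos.2 ⟨e₀, hmem⟩
    rw [density, Finset.card_pair (hab e₀)] at hd
    push_cast at hd
    linarith
  by_contra hcon
  push_neg at hcon
  have hμpos : 0 < μ := by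
    have : 0 < Real.exp (100 * A) * (ρ + 100 * x * β) := by
      apply mul_pos (Real.exp_pos _)
      nlinarith
    linarith
  -- level sets
  set S : ℝ → Finset V := fun r => univ.filter (fun v => r ≤ inDeg a b o.y v) with hS_def
  have hSmem' : ∀ r : ℝ, r ≤ μ → v₀ ∈ S r := by
    intro r hr
    rw [hS_def]
    exact Finset.mem_filter.2 ⟨mem_univ _, by rw [← hμ_eq]; exact hr⟩
  have hstep : ∀ r r' : ℝ, r' ≤ (r - β)/(1+α) → r' ≤ r →
      ∑ v ∈ S r, inDeg a b o.y v ≤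
        ((univ.filter fun e => a e ∈ S r' ∧ b e ∈ S r').card : ℝ) := by
    intro r r' h1 h2
    have expand : ∑ v ∈ S r, inDeg a b o.y v
        = ∑ e ∈ (univ : Finset E), ∑ v ∈ S r, (if a e = v ∨ b e = v then o.y e v else 0) := by
      rw [show ∑ v ∈ S r, inDeg a b o.y v
          = ∑ v ∈ S r, ∑ e ∈ (univ : Finset E), (if a e = v ∨ b e = v then o.y e v else 0) from
        Finset.sum_congr rfl fun v _ => by rw [inDeg, Finset.sum_filter]]
      exact Finset.sum_comm
    rw [expand, show ((univ.filter fun e => a e ∈ S r' ∧ b e ∈ S r').card : ℝ)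
        = ∑ e ∈ (univ : Finset E), (if a e ∈ S r' ∧ b e ∈ S r' then (1:ℝ) else 0) from
      (Finset.sum_boole _ _).symm]
    refine Finset.sum_le_sum fun e _ => ?_
    by_cases hpos : ∃ v ∈ S r, (a e = v ∨ b e = v) ∧ 0 < o.y e v
    · obtain ⟨v, hvS, hinc, hy⟩ := hpos
      have hvr : r ≤ inDeg a b o.y v := by
        have := Finset.mem_filter.1 hvS
        exact this.2
      have hmemS : ∀ w, r' ≤ inDeg a b o.y w → w ∈ S r' := fun w hw =>
        Finset.mem_filter.2 ⟨mem_univ _, hw⟩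
      have hkey : a e ∈ S r' ∧ b e ∈ S r' := by
        rcases hinc with hva | hvb
        · subst hva
          have hlt := (hopt e).2 hy
          refine ⟨hmemS _ (le_trans h2 hvr), hmemS _ ?_⟩
          have hq : (r - β)/(1+α) < inDeg a b o.y (b e) := by
            rw [div_lt_iff₀ h1α]; linarith [hlt, hvr]
          linarith
        · subst hvb
          have hlt := (hopt e).1 hy
          refine ⟨hmemS _ ?_, hmemS _ (le_trans h2 hvr)⟩
          have hq : (r - β)/(1+α) < inDeg a b o.y (a e) := by
            rw [div_lt_iff₀ h1α]; linarith [hlt, hvr]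
          linarith
      rw [if_pos hkey]
      calc ∑ v ∈ S r, (if a e = v ∨ b e = v then o.y e v else 0)
          ≤ ∑ v ∈ (univ : Finset V), (if a e = v ∨ b e = v then o.y e v else 0) :=
            Finset.sum_le_sum_of_subset_of_nonneg (Finset.subset_univ _)
              (fun w _ _ => by split_ifs with h; exacts [o.nonneg e w, le_rfl])
        _ = 1 := by
            rw [← Finset.sum_filter]
            rw [show (univ.filter fun v => a e = v ∨ b e = v) = {a e, b e} from by
              ext w; simp [eq_comm]]
            rw [Finset.sum_pair (hab e), o.sum_one]
    · push_neg at hpos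
      have hle : ∑ v ∈ S r, (if a e = v ∨ b e = v then o.y e v else 0) ≤ 0 := by
        apply Finset.sum_nonpos
        intro v hv
        split_ifs with h
        · exact hpos v hv h
        · exact le_rfl
      refine hle.trans ?_
      split_ifs <;> norm_num
  -- thresholds
  set t : ℕ → ℝ := fun i => μ / (1+α)^i - i * β with ht_def
  have ht_le_μ : ∀ i, t i ≤ μ := by
    intro i
    rw [ht_def]
    have h1 : (1:ℝ) ≤ (1+α)^i := one_le_pow₀ (by linarith)
    have h2 : μ / (1+α)^i ≤ μ := div_le_self hμpos.le h1
    have h3 : 0 ≤ (i:ℝ) * β := by positivity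
    simp only []
    linarith
  have ht_mono : ∀ i, t (i+1) ≤ t i := by
    intro i
    rw [ht_def]
    simp only []
    have h1 : μ / (1+α)^(i+1) ≤ μ / (1+α)^i :=
      div_le_div_of_nonneg_left hμpos.le (pow_pos h1α i) (pow_le_pow_right₀ (by linarith) (by omega))
    push_cast
    nlinarith
  have ht_anti : Antitone t := antitone_nat_of_succ_le ht_mono
  have hrec : ∀ i : ℕ, t (i+1) ≤ (t i - β)/(1+α) := by
    intro i
    rw [le_div_iff₀ h1α, ht_def]
    simp only []
    have hpi : (0:ℝ) < (1+α)^i := pow_pos h1α i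
    have hkey : μ / (1+α)^(i+1) * (1+α) = μ / (1+α)^i := by
      rw [pow_succ]
      field_simp
    push_cast
    nlinarith [hkey, mul_nonneg (mul_nonneg (by positivity : (0:ℝ) ≤ (i:ℝ)+1) hβ.le) hα.le]
  set T := t k with hT_def
  have hTgt : Real.exp (98*A) * ρ < T := by
    have h2 : μ / Real.exp (2*A) ≤ μ / (1+α)^k :=
      div_le_div_of_nonneg_left hμpos.le (pow_pos h1α k) hpowk
    have h3 : μ / Real.exp (2*A) = μ * Real.exp (-(2*A)) := by
      rw [Real.exp_neg, div_eq_mul_inv]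
    have h4 : Real.exp (100*A) * (ρ + 100*x*β) * Real.exp (-(2*A))
        = Real.exp (98*A) * (ρ + 100*x*β) := by
      rw [mul_comm (Real.exp (100*A)) _, mul_assoc, ← Real.exp_add]
      ring_nf
    have h5 : Real.exp (98*A) * (ρ + 100*x*β) < μ * Real.exp (-(2*A)) := by
      rw [← h4]
      exact mul_lt_mul_of_pos_right hcon (Real.exp_pos _)
    have hexp1 : (1:ℝ) ≤ Real.exp (98*A) := Real.one_le_exp (by positivity)
    have h6 : (k:ℝ) * β ≤ Real.exp (98*A) * (100 * x * β) := by
      nlinarith [mul_le_mul_of_nonneg_right hkx hβ.le,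
        mul_le_mul_of_nonneg_right hexp1 (by positivity : (0:ℝ) ≤ 100*x*β),
        mul_nonneg hx0.le hβ.le]
    rw [hT_def, ht_def]
    simp only []
    linarith [h5, h6, h3.symm.trans_le h2]
  have hT0 : 0 < T := lt_of_le_of_lt (by positivity) hTgt
  -- main induction
  have hSne : ∀ i : ℕ, (S (t i)).Nonempty := fun i => ⟨v₀, hSmem' _ (ht_le_μ i)⟩
  have hP : ∀ i, i ≤ k → T^i ≤ ρ^i * ((S (t i)).card : ℝ) := by
    intro i
    induction i with
    | zero =>
      intro _
      have h1 : (1:ℝ) ≤ ((S (t 0)).card : ℝ) := by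
        exact_mod_cast Finset.card_pos.2 (hSne 0)
      simpa using h1
    | succ i ih =>
      intro hik
      have hik' : i ≤ k := Nat.le_of_succ_le hik
      have h0 := ih hik'
      have hcard1 : t i * ((S (t i)).card : ℝ) ≤ ∑ v ∈ S (t i), inDeg a b o.y v := by
        have hh := Finset.card_nsmul_le_sum (S (t i)) (inDeg a b o.y) (t i)
          (fun v hv => (Finset.mem_filter.1 hv).2)
        rw [nsmul_eq_mul] at hh
        linarith [hh]
      have h2 := hstep (t i) (t (i+1)) (hrec i) (ht_mono i)
      have h3 := hρS (S (t (i+1))) (hSne (i+1))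
      have h4 : t i * ((S (t i)).card : ℝ) ≤ ρ * ((S (t (i+1))).card : ℝ) :=
        le_trans hcard1 (le_trans h2 h3)
      have hTi : T ≤ t i := ht_anti hik'
      have hcard0 : (0:ℝ) ≤ ((S (t i)).card : ℝ) := Nat.cast_nonneg _
      have hρi : (0:ℝ) ≤ ρ^i := pow_nonneg hρ0 i
      calc T^(i+1) = T * T^i := by ring
        _ ≤ T * (ρ^i * ((S (t i)).card : ℝ)) := mul_le_mul_of_nonneg_left h0 hT0.le
        _ = ρ^i * (T * ((S (t i)).card : ℝ)) := by ring
        _ ≤ ρ^i * (t i * ((S (t i)).card : ℝ)) :=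
            mul_le_mul_of_nonneg_left (mul_le_mul_of_nonneg_right hTi hcard0) hρi
        _ ≤ ρ^i * (ρ * ((S (t (i+1))).card : ℝ)) := mul_le_mul_of_nonneg_left h4 hρi
        _ = ρ^(i+1) * ((S (t (i+1))).card : ℝ) := by ring
  -- endgame
  have hPk := hP k le_rfl
  have hcard_n : ((S (t k)).card : ℝ) ≤ n := by
    rw [hn_def]
    exact_mod_cast Finset.card_le_univ _
  have hfin1 : T^k ≤ ρ^k * n :=
    le_trans hPk (mul_le_mul_of_nonneg_left hcard_n (pow_nonneg hρ0 k))
  have hnexp : (n:ℝ) ≤ Real.exp (98*A*(k:ℝ)) := by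
    have hAk : L ≤ A * k := by
      calc L = A * x := hAx.symm
        _ ≤ A * k := mul_le_mul_of_nonneg_left hxk hA0
    have h1 : Real.exp L = n := Real.exp_log (by positivity)
    have h2 : Real.exp L ≤ Real.exp (98*A*k) := Real.exp_le_exp.2 (by nlinarith)
    linarith [h1 ▸ h2]
  have hfin2 : ρ^k * n < T^k := by
    have h1 : (Real.exp (98*A) * ρ)^k < T^k :=
      pow_lt_pow_left₀ hTgt (by positivity) (by omega)
    have h2 : (Real.exp (98*A) * ρ)^k = Real.exp (98*A*k) * ρ^k := by
      rw [mul_pow, ← Real.exp_nat_mul]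
      ring_nf
    have h3 : ρ^k * n ≤ Real.exp (98*A*k) * ρ^k := by
      have := mul_le_mul_of_nonneg_left hnexp (pow_nonneg hρ0 k)
      linarith [this]
    linarith
  linarith
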